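/- Every stationary policy π with Pr^π(◇B) = x*_{s0} satisfies sup_{t≥1} Σ_{s∈B∪S_0} Σ_{a∈A(s)} μ_t^π(s,a) = 1; that is, any stationary policy that maximizes the probability of reaching B is guaranteed to reach the absorbing set B ∪ S_0 with probability 1. -/

import Mathlib

open scoped ENNReal

section

variable {S A : Type} [Fintype S] [Fintype A] [DecidableEq S] [DecidableEq A]

/-- A policy: a sequence of decision rules, each supported on the available actions. -/
def IsPolicy (avail : S → Finset A) (π : ℕ → S → A → ℝ) : Prop :=
  ∀ t s, (∀ a, 0 ≤ π t s a) ∧ (∀ a, a ∉ avail s → π t s a = 0) ∧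
    (∑ a ∈ avail s, π t s a) = 1

/-- A stationary policy uses the same decision rule at every stage. -/
def IsStationaryPolicy (π : ℕ → S → A → ℝ) : Prop := ∀ t, π t = π 0

/-- Occupancy measures: `occ P avail init π t s a` is `μ^π_{t+1}(s,a)` (stages indexed from 1). -/
def occ (P : S → A → S → ℝ) (avail : S → Finset A) (init : S)
    (π : ℕ → S → A → ℝ) : ℕ → S → A → ℝ
  | 0 => fun s a => if s = init then π 0 s a else 0
  | t + 1 => fun s' a' =>
      π (t + 1) s' a' * ∑ s : S, ∑ a ∈ avail s, P s a s' * occ P avail init π t s a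

/-- Expected residence time `ξ^π(s,a) ∈ [0,∞]`. -/
noncomputable def resTime (P : S → A → S → ℝ) (avail : S → Finset A) (init : S)
    (π : ℕ → S → A → ℝ) (s : S) (a : A) : ℝ≥0∞ :=
  ∑' t : ℕ, ENNReal.ofReal (occ P avail init π t s a)

/-- Probability of reaching the absorbing set `B`. -/
noncomputable def reachProb (P : S → A → S → ℝ) (avail : S → Finset A) (B : Finset S)
    (init : S) (π : ℕ → S → A → ℝ) : ℝ≥0∞ :=
  ⨆ t : ℕ, ∑ s ∈ B, ∑ a ∈ avail s, ENNReal.ofReal (occ P avail init π t s a)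

/-- `x*_s`: optimal probability of reaching `B` starting from `s`. -/
noncomputable def xstar (P : S → A → S → ℝ) (avail : S → Finset A) (B : Finset S)
    (s : S) : ℝ≥0∞ :=
  ⨆ π : {π : ℕ → S → A → ℝ // IsPolicy avail π}, reachProb P avail B s π.1

/-- A state is absorbing if every available action loops on it with probability 1. -/
def Absorbing (P : S → A → S → ℝ) (avail : S → Finset A) (s : S) : Prop :=
  ∀ a ∈ avail s, P s a s = 1

/-- Expected total cost `f_c(π) ∈ [0,∞]`. -/
noncomputable def totalCost (P : S → A → S → ℝ) (avail : S → Finset A) (init : S)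
    (c : S → A → ℝ) (π : ℕ → S → A → ℝ) : ℝ≥0∞ :=
  ∑ s : S, ∑ a ∈ avail s, resTime P avail init π s a * ENNReal.ofReal (c s a)


open scoped Classical

/-! ### Auxiliary development -/

set_option linter.unusedSectionVars false

section Aux

lemma sum_swap4' {α β γ δ : Type*} (s : Finset α) (f : α → Finset β) (u : Finset γ)
    (v : Finset δ) (F : α → β → γ → δ → ℝ) :
    ∑ x ∈ s, ∑ y ∈ f x, ∑ z ∈ u, ∑ w ∈ v, F x y z w
      = ∑ z ∈ u, ∑ w ∈ v, ∑ x ∈ s, ∑ y ∈ f x, F x y z w := by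
  rw [Finset.sum_congr rfl fun x (_ : x ∈ s) =>
    (Finset.sum_comm (s := f x) (t := u) (f := fun y z => ∑ w ∈ v, F x y z w))]
  rw [Finset.sum_comm]
  refine Finset.sum_congr rfl fun z _ => ?_
  rw [Finset.sum_congr rfl fun x (_ : x ∈ s) =>
    (Finset.sum_comm (s := f x) (t := v) (f := fun y w => F x y z w))]
  rw [Finset.sum_comm]

lemma key_alg (U : Finset A) (pi0 : A → ℝ) (Pi : A → S → ℝ)
    (c : ℝ) (Pp : S → A → ℝ) (avail : S → Finset A) (O : S → S → A → ℝ) :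
    c * ∑ s : S, ∑ a ∈ avail s, Pp s a * (∑ a1 ∈ U, pi0 a1 * ∑ s1 : S, Pi a1 s1 * O s1 s a)
    = ∑ a1 ∈ U, pi0 a1 * ∑ s1 : S, Pi a1 s1 *
        (c * ∑ s : S, ∑ a ∈ avail s, Pp s a * O s1 s a) := by
  simp only [Finset.mul_sum]
  rw [sum_swap4']
  refine Finset.sum_congr rfl fun a1 _ => Finset.sum_congr rfl fun s1 _ =>
    Finset.sum_congr rfl fun s _ => Finset.sum_congr rfl fun a _ => by ring

/-- shift of a policy by one stage -/
def shiftPol (π : ℕ → S → A → ℝ) : ℕ → S → A → ℝ := fun n => π (n + 1)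

lemma isPolicy_shift {avail : S → Finset A} {π : ℕ → S → A → ℝ} (h : IsPolicy avail π) :
    IsPolicy avail (shiftPol π) := fun t s => h (t + 1) s

variable (P : S → A → S → ℝ) (avail : S → Finset A)

/-- mass in `C` at stage `t+1` -/
noncomputable def mass (C : Finset S) (init : S) (π : ℕ → S → A → ℝ) (t : ℕ) : ℝ :=
  ∑ s ∈ C, ∑ a ∈ avail s, occ P avail init π t s a

lemma occ_nonneg (hP0 : ∀ s a s', 0 ≤ P s a s') {π} (hπ : IsPolicy avail π) (init : S) :
    ∀ t s a, 0 ≤ occ P avail init π t s a := by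
  intro t
  induction t with
  | zero =>
    intro s a
    simp only [occ]
    split
    · exact (hπ 0 s).1 a
    · exact le_refl 0
  | succ t ih =>
    intro s' a'
    simp only [occ]
    exact mul_nonneg ((hπ (t+1) s').1 a')
      (Finset.sum_nonneg fun s _ => Finset.sum_nonneg fun a _ =>
        mul_nonneg (hP0 _ _ _) (ih s a))

lemma occ_total (hP1 : ∀ s, ∀ a ∈ avail s, (∑ s' : S, P s a s') = 1)
    {π} (hπ : IsPolicy avail π) (init : S) :
    ∀ t, ∑ s : S, ∑ a ∈ avail s, occ P avail init π t s a = 1 := by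
  intro t
  induction t with
  | zero =>
    simp only [occ]
    rw [Finset.sum_eq_single init]
    · simp only [if_pos rfl]
      exact (hπ 0 init).2.2
    · intro s _ hs
      exact Finset.sum_eq_zero fun a _ => if_neg hs
    · intro h; exact absurd (Finset.mem_univ init) h
  | succ t ih =>
    simp only [occ]
    have h1 : ∀ s' : S, ∑ a' ∈ avail s', π (t+1) s' a' *
        (∑ s : S, ∑ a ∈ avail s, P s a s' * occ P avail init π t s a)
        = ∑ s : S, ∑ a ∈ avail s, P s a s' * occ P avail init π t s a := by
      intro s'
      rw [← Finset.sum_mul, (hπ (t+1) s').2.2, one_mul]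
    rw [Finset.sum_congr rfl fun s' _ => h1 s']
    rw [Finset.sum_comm]
    calc ∑ s : S, ∑ s' : S, ∑ a ∈ avail s, P s a s' * occ P avail init π t s a
        = ∑ s : S, ∑ a ∈ avail s, (∑ s' : S, P s a s') * occ P avail init π t s a := by
          refine Finset.sum_congr rfl fun s _ => ?_
          rw [Finset.sum_comm]
          exact Finset.sum_congr rfl fun a _ => by rw [Finset.sum_mul]
      _ = 1 := by
          rw [← ih]
          refine Finset.sum_congr rfl fun s _ => Finset.sum_congr rfl fun a ha => ?_
          rw [hP1 s a ha, one_mul]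

lemma mass_nonneg (hP0 : ∀ s a s', 0 ≤ P s a s') {π} (hπ : IsPolicy avail π)
    (C : Finset S) (init : S) (t : ℕ) : 0 ≤ mass P avail C init π t :=
  Finset.sum_nonneg fun s _ => Finset.sum_nonneg fun a _ => occ_nonneg P avail hP0 hπ init t s a

lemma mass_le_one (hP0 : ∀ s a s', 0 ≤ P s a s')
    (hP1 : ∀ s, ∀ a ∈ avail s, (∑ s' : S, P s a s') = 1)
    {π} (hπ : IsPolicy avail π) (C : Finset S) (init : S) (t : ℕ) :
    mass P avail C init π t ≤ 1 := by
  rw [← occ_total P avail hP1 hπ init t]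
  exact Finset.sum_le_sum_of_subset_of_nonneg (Finset.subset_univ C)
    (fun s _ _ => Finset.sum_nonneg fun a _ => occ_nonneg P avail hP0 hπ init t s a)

lemma mass_zero {π} (hπ : IsPolicy avail π) (C : Finset S) (init : S) :
    mass P avail C init π 0 = if init ∈ C then 1 else 0 := by
  unfold mass
  have h : ∀ s ∈ C, (∑ a ∈ avail s, occ P avail init π 0 s a) = if s = init then 1 else 0 := by
    intro s _
    simp only [occ]
    split
    · subst ‹s = init›; exact (hπ 0 s).2.2
    · exact Finset.sum_const_zero
  rw [Finset.sum_congr rfl h, Finset.sum_ite_eq' C init (fun _ => (1:ℝ))]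

lemma occ_shift {π : ℕ → S → A → ℝ} (init : S) :
    ∀ t s' a', occ P avail init π (t+1) s' a' =
      ∑ a1 ∈ avail init, π 0 init a1 *
        ∑ s1 : S, P init a1 s1 * occ P avail s1 (shiftPol π) t s' a' := by
  intro t
  induction t with
  | zero =>
    intro s' a'
    simp only [occ, shiftPol]
    have h1 : ∀ s : S, ∑ a ∈ avail s, P s a s' * (if s = init then π 0 s a else 0)
        = if s = init then ∑ a ∈ avail s, P s a s' * π 0 s a else 0 := by
      intro s; split
      · rfl
      · simp [*]
    rw [Finset.sum_congr rfl fun s (_ : s ∈ Finset.univ) => h1 s,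
      Finset.sum_ite_eq' Finset.univ init (fun s => ∑ a ∈ avail s, P s a s' * π 0 s a),
      if_pos (Finset.mem_univ init), Finset.mul_sum]
    refine Finset.sum_congr rfl fun a1 _ => ?_
    have h2 : ∀ s1 : S, P init a1 s1 * (if s' = s1 then π 1 s' a' else 0)
        = if s1 = s' then P init a1 s1 * π 1 s' a' else 0 := by
      intro s1
      by_cases h : s1 = s'
      · subst h; rw [if_pos rfl, if_pos rfl]
      · rw [if_neg h, if_neg (fun hh => h hh.symm), mul_zero]
    rw [Finset.sum_congr rfl fun s1 (_ : s1 ∈ Finset.univ) => h2 s1,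
      Finset.sum_ite_eq' Finset.univ s' (fun s1 => P init a1 s1 * π 1 s' a'),
      if_pos (Finset.mem_univ s')]
    ring
  | succ t ih =>
    intro s' a'
    calc occ P avail init π (t+1+1) s' a'
        = π (t+1+1) s' a' * ∑ s : S, ∑ a ∈ avail s, P s a s' * occ P avail init π (t+1) s a :=
          rfl
      _ = π (t+1+1) s' a' * ∑ s : S, ∑ a ∈ avail s, P s a s' *
            (∑ a1 ∈ avail init, π 0 init a1 *
              ∑ s1 : S, P init a1 s1 * occ P avail s1 (shiftPol π) t s a) := by
          rw [Finset.sum_congr rfl fun s (_ : s ∈ Finset.univ) =>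
            Finset.sum_congr rfl fun a (_ : a ∈ avail s) => by rw [ih s a]]
      _ = ∑ a1 ∈ avail init, π 0 init a1 * ∑ s1 : S, P init a1 s1 *
            occ P avail s1 (shiftPol π) (t+1) s' a' :=
          key_alg (avail init) (π 0 init) (P init) (π (t + 1 + 1) s' a')
            (fun s a => P s a s') avail (fun s1 s a => occ P avail s1 (shiftPol π) t s a)

lemma mass_rec (C : Finset S) {π : ℕ → S → A → ℝ} (init : S) (t : ℕ) :
    mass P avail C init π (t+1) = ∑ a1 ∈ avail init, π 0 init a1 *
      ∑ s1 : S, P init a1 s1 * mass P avail C s1 (shiftPol π) t := by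
  unfold mass
  rw [Finset.sum_congr rfl fun s (_ : s ∈ C) =>
    Finset.sum_congr rfl fun a (_ : a ∈ avail s) => occ_shift P avail init t s a]
  simp only [Finset.mul_sum]
  rw [sum_swap4' C (fun s => avail s) (avail init) Finset.univ]

lemma mass_mono (hP0 : ∀ s a s', 0 ≤ P s a s') {π} (hπ : IsPolicy avail π)
    (C : Finset S) (habs : ∀ s ∈ C, ∀ a ∈ avail s, P s a s = 1) (init : S) :
    Monotone (mass P avail C init π) := by
  refine monotone_nat_of_le_succ fun t => ?_
  have hstep : mass P avail C init π (t+1)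
      = ∑ s ∈ C, ∑ s'' : S, ∑ a'' ∈ avail s'', P s'' a'' s * occ P avail init π t s'' a'' := by
    unfold mass
    refine Finset.sum_congr rfl fun s _ => ?_
    have : ∀ a' ∈ avail s, occ P avail init π (t+1) s a'
        = π (t+1) s a' * ∑ s'' : S, ∑ a'' ∈ avail s'', P s'' a'' s * occ P avail init π t s'' a'' :=
      fun a' _ => rfl
    rw [Finset.sum_congr rfl this, ← Finset.sum_mul, (hπ (t+1) s).2.2, one_mul]
  rw [hstep]
  refine Finset.sum_le_sum fun s hs => ?_
  have h1 : ∑ a'' ∈ avail s, P s a'' s * occ P avail init π t s a''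
      ≤ ∑ s'' : S, ∑ a'' ∈ avail s'', P s'' a'' s * occ P avail init π t s'' a'' :=
    Finset.single_le_sum (f := fun s'' => ∑ a'' ∈ avail s'', P s'' a'' s * occ P avail init π t s'' a'')
      (fun s'' _ => Finset.sum_nonneg fun a'' _ =>
        mul_nonneg (hP0 _ _ _) (occ_nonneg P avail hP0 hπ init t s'' a'')) (Finset.mem_univ s)
  refine le_trans (le_of_eq ?_) h1
  refine Finset.sum_congr rfl fun a'' ha'' => ?_
  rw [habs s hs a'' ha'', one_mul]

lemma occ_prod {π} (hπ : IsPolicy avail π) (hstat : IsStationaryPolicy π) (init : S) :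
    ∀ t s a, occ P avail init π t s a
      = π 0 s a * ∑ a' ∈ avail s, occ P avail init π t s a' := by
  intro t s a
  cases t with
  | zero =>
    simp only [occ]
    by_cases h : s = init
    · rw [if_pos h, Finset.sum_congr rfl fun a' (_ : a' ∈ avail s) => if_pos h,
        (hπ 0 s).2.2, mul_one]
    · rw [if_neg h, Finset.sum_congr rfl fun a' (_ : a' ∈ avail s) => if_neg h,
        Finset.sum_const_zero, mul_zero]
  | succ t =>
    have hunf : ∀ a', occ P avail init π (t+1) s a'
        = π (t+1) s a' * ∑ s'' : S, ∑ a'' ∈ avail s'', P s'' a'' s * occ P avail init π t s'' a'' :=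
      fun a' => rfl
    rw [hunf a, Finset.sum_congr rfl fun a' (_ : a' ∈ avail s) => hunf a',
      ← Finset.sum_mul, hstat (t+1), (hπ 0 s).2.2, one_mul]

end Aux

/-! ### Value iteration -/

section VI

variable (P : S → A → S → ℝ) (avail : S → Finset A)
    (havail : ∀ s : S, (avail s).Nonempty) (B : Finset S)

noncomputable def Wit : ℕ → S → ℝ
  | 0 => fun s => if s ∈ B then 1 else 0
  | n + 1 => fun s => if s ∈ B then 1 else
      (avail s).sup' (havail s) fun a => ∑ s' : S, P s a s' * Wit n s'

lemma Wit_nonneg (hP0 : ∀ s a s', 0 ≤ P s a s') : ∀ n s, 0 ≤ Wit P avail havail B n s := by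
  intro n
  induction n with
  | zero =>
    intro s; simp only [Wit]; split
    · exact zero_le_one
    · exact le_refl 0
  | succ n ih =>
    intro s; simp only [Wit]; split
    · exact zero_le_one
    · obtain ⟨a, ha⟩ := havail s
      exact le_trans (Finset.sum_nonneg fun s' _ => mul_nonneg (hP0 _ _ _) (ih s'))
        (Finset.le_sup' (fun a => ∑ s' : S, P s a s' * Wit P avail havail B n s') ha)

lemma Wit_le_one (hP0 : ∀ s a s', 0 ≤ P s a s')
    (hP1 : ∀ s, ∀ a ∈ avail s, (∑ s' : S, P s a s') = 1) :
    ∀ n s, Wit P avail havail B n s ≤ 1 := by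
  intro n
  induction n with
  | zero =>
    intro s; simp only [Wit]; split
    · exact le_refl 1
    · exact zero_le_one
  | succ n ih =>
    intro s; simp only [Wit]; split
    · exact le_refl 1
    · refine Finset.sup'_le _ _ fun a ha => ?_
      calc ∑ s' : S, P s a s' * Wit P avail havail B n s'
          ≤ ∑ s' : S, P s a s' := Finset.sum_le_sum fun s' _ =>
            mul_le_of_le_one_right (hP0 _ _ _) (ih s')
        _ = 1 := hP1 s a ha

lemma Wit_mono (hP0 : ∀ s a s', 0 ≤ P s a s') :
    ∀ n s, Wit P avail havail B n s ≤ Wit P avail havail B (n+1) s := by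
  intro n
  induction n with
  | zero =>
    intro s
    by_cases h : s ∈ B
    · simp [Wit, h]
    · simp only [Wit, if_neg h]
      obtain ⟨a, ha⟩ := havail s
      exact le_trans (Finset.sum_nonneg fun s' _ => mul_nonneg (hP0 _ _ _)
        (Wit_nonneg P avail havail B hP0 0 s'))
        (Finset.le_sup' (fun a => ∑ s' : S, P s a s' * Wit P avail havail B 0 s') ha)
  | succ n ih =>
    intro s
    by_cases h : s ∈ B
    · simp [Wit, h]
    · simp only [Wit, if_neg h]
      refine Finset.sup'_le _ _ fun a ha => ?_
      refine le_trans (Finset.sum_le_sum fun s' _ =>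
        mul_le_mul_of_nonneg_left (ih s') (hP0 _ _ _))
        (Finset.le_sup' (fun a => ∑ s' : S, P s a s' * Wit P avail havail B (n+1) s') ha)

noncomputable def wlim (s : S) : ℝ := ⨆ n, Wit P avail havail B n s

lemma Wit_bdd (hP0 : ∀ s a s', 0 ≤ P s a s')
    (hP1 : ∀ s, ∀ a ∈ avail s, (∑ s' : S, P s a s') = 1) (s : S) :
    BddAbove (Set.range fun n => Wit P avail havail B n s) := by
  refine ⟨1, ?_⟩
  rintro x ⟨n, rfl⟩
  exact Wit_le_one P avail havail B hP0 hP1 n s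

lemma Wit_le_wlim (hP0 : ∀ s a s', 0 ≤ P s a s')
    (hP1 : ∀ s, ∀ a ∈ avail s, (∑ s' : S, P s a s') = 1) (n : ℕ) (s : S) :
    Wit P avail havail B n s ≤ wlim P avail havail B s :=
  le_ciSup (Wit_bdd P avail havail B hP0 hP1 s) n

lemma wlim_nonneg (hP0 : ∀ s a s', 0 ≤ P s a s')
    (hP1 : ∀ s, ∀ a ∈ avail s, (∑ s' : S, P s a s') = 1) (s : S) :
    0 ≤ wlim P avail havail B s :=
  le_trans (Wit_nonneg P avail havail B hP0 0 s) (Wit_le_wlim P avail havail B hP0 hP1 0 s)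

lemma wlim_le_one (hP0 : ∀ s a s', 0 ≤ P s a s')
    (hP1 : ∀ s, ∀ a ∈ avail s, (∑ s' : S, P s a s') = 1) (s : S) :
    wlim P avail havail B s ≤ 1 :=
  ciSup_le fun n => Wit_le_one P avail havail B hP0 hP1 n s

lemma wlim_of_mem (hP0 : ∀ s a s', 0 ≤ P s a s')
    (hP1 : ∀ s, ∀ a ∈ avail s, (∑ s' : S, P s a s') = 1) {s : S} (hs : s ∈ B) :
    wlim P avail havail B s = 1 := by
  refine le_antisymm (wlim_le_one P avail havail B hP0 hP1 s) ?_
  have : Wit P avail havail B 0 s = 1 := by simp [Wit, hs]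
  rw [← this]
  exact Wit_le_wlim P avail havail B hP0 hP1 0 s

lemma Wit_tendsto (hP0 : ∀ s a s', 0 ≤ P s a s')
    (hP1 : ∀ s, ∀ a ∈ avail s, (∑ s' : S, P s a s') = 1) (s : S) :
    Filter.Tendsto (fun n => Wit P avail havail B n s) Filter.atTop
      (nhds (wlim P avail havail B s)) :=
  tendsto_atTop_ciSup (monotone_nat_of_le_succ fun n => Wit_mono P avail havail B hP0 n s)
    (Wit_bdd P avail havail B hP0 hP1 s)

lemma wlim_superharmonic (hP0 : ∀ s a s', 0 ≤ P s a s')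
    (hP1 : ∀ s, ∀ a ∈ avail s, (∑ s' : S, P s a s') = 1) (s : S) (a : A) (ha : a ∈ avail s) :
    ∑ s' : S, P s a s' * wlim P avail havail B s' ≤ wlim P avail havail B s := by
  have htend : Filter.Tendsto (fun n => ∑ s' : S, P s a s' * Wit P avail havail B n s')
      Filter.atTop (nhds (∑ s' : S, P s a s' * wlim P avail havail B s')) :=
    tendsto_finset_sum _ fun s' _ =>
      (Wit_tendsto P avail havail B hP0 hP1 s').const_mul _
  refine le_of_tendsto htend (Filter.Eventually.of_forall fun n => ?_)
  by_cases h : s ∈ B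
  · calc ∑ s' : S, P s a s' * Wit P avail havail B n s'
        ≤ ∑ s' : S, P s a s' := Finset.sum_le_sum fun s' _ =>
          mul_le_of_le_one_right (hP0 _ _ _) (Wit_le_one P avail havail B hP0 hP1 n s')
      _ = 1 := hP1 s a ha
      _ = wlim P avail havail B s := (wlim_of_mem P avail havail B hP0 hP1 h).symm
  · have h1 : ∑ s' : S, P s a s' * Wit P avail havail B n s'
        ≤ Wit P avail havail B (n+1) s := by
      simp only [Wit, if_neg h]
      exact Finset.le_sup' (fun a => ∑ s' : S, P s a s' * Wit P avail havail B n s') ha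
    exact le_trans h1 (Wit_le_wlim P avail havail B hP0 hP1 (n+1) s)

lemma mass_le_Wit (hP0 : ∀ s a s', 0 ≤ P s a s')
    (hP1 : ∀ s, ∀ a ∈ avail s, (∑ s' : S, P s a s') = 1) :
    ∀ t (π : ℕ → S → A → ℝ), IsPolicy avail π → ∀ init,
      mass P avail B init π t ≤ Wit P avail havail B t init := by
  intro t
  induction t with
  | zero =>
    intro π hπ init
    rw [mass_zero P avail hπ B init]
    simp only [Wit]
    exact le_refl _
  | succ t ih =>
    intro π hπ init
    by_cases hB : init ∈ B
    · calc mass P avail B init π (t+1) ≤ 1 := mass_le_one P avail hP0 hP1 hπ B init (t+1)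
        _ = Wit P avail havail B (t+1) init := by simp [Wit, hB]
    · rw [mass_rec P avail B init t]
      have hW : Wit P avail havail B (t+1) init
          = (avail init).sup' (havail init)
            (fun a => ∑ s' : S, P init a s' * Wit P avail havail B t s') := by
        simp [Wit, hB]
      rw [hW]
      have hinner : ∀ a1 ∈ avail init,
          ∑ s1 : S, P init a1 s1 * mass P avail B s1 (shiftPol π) t
          ≤ (avail init).sup' (havail init)
            (fun a => ∑ s' : S, P init a s' * Wit P avail havail B t s') := by
        intro a1 ha1
        refine le_trans (Finset.sum_le_sum fun s1 _ =>
          mul_le_mul_of_nonneg_left (ih (shiftPol π) (isPolicy_shift hπ) s1) (hP0 _ _ _))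
          (Finset.le_sup' (fun a => ∑ s' : S, P init a s' * Wit P avail havail B t s') ha1)
      calc ∑ a1 ∈ avail init, π 0 init a1 *
            ∑ s1 : S, P init a1 s1 * mass P avail B s1 (shiftPol π) t
          ≤ ∑ a1 ∈ avail init, π 0 init a1 * (avail init).sup' (havail init)
              (fun a => ∑ s' : S, P init a s' * Wit P avail havail B t s') :=
            Finset.sum_le_sum fun a1 ha1 =>
              mul_le_mul_of_nonneg_left (hinner a1 ha1) ((hπ 0 init).1 a1)
        _ = (avail init).sup' (havail init)
              (fun a => ∑ s' : S, P init a s' * Wit P avail havail B t s') := by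
            rw [← Finset.sum_mul, (hπ 0 init).2.2, one_mul]

/-! greedy policies -/

noncomputable def gact (n : ℕ) (s : S) : A :=
  (Finset.exists_mem_eq_sup' (havail s)
    (fun a => ∑ s' : S, P s a s' * Wit P avail havail B n s')).choose

lemma gact_mem (n : ℕ) (s : S) : gact P avail havail B n s ∈ avail s :=
  (Finset.exists_mem_eq_sup' (havail s)
    (fun a => ∑ s' : S, P s a s' * Wit P avail havail B n s')).choose_spec.1

lemma gact_spec (n : ℕ) (s : S) :
    (avail s).sup' (havail s) (fun a => ∑ s' : S, P s a s' * Wit P avail havail B n s')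
      = ∑ s' : S, P s (gact P avail havail B n s) s' * Wit P avail havail B n s' :=
  (Finset.exists_mem_eq_sup' (havail s)
    (fun a => ∑ s' : S, P s a s' * Wit P avail havail B n s')).choose_spec.2

noncomputable def gpol : ℕ → ℕ → S → A → ℝ
  | 0 => fun _ s a => if a = gact P avail havail B 0 s then 1 else 0
  | t+1 => fun k => match k with
      | 0 => fun s a => if a = gact P avail havail B t s then 1 else 0
      | k+1 => gpol t k

lemma gpol_shift (t : ℕ) : shiftPol (gpol P avail havail B (t+1)) = gpol P avail havail B t :=
  rfl

lemma isPolicy_ind (g : S → A) (hg : ∀ s, g s ∈ avail s) (s : S) :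
    (∀ a, (0:ℝ) ≤ if a = g s then 1 else 0) ∧
      (∀ a, a ∉ avail s → (if a = g s then (1:ℝ) else 0) = 0) ∧
      (∑ a ∈ avail s, if a = g s then (1:ℝ) else 0) = 1 := by
  refine ⟨fun a => ?_, fun a ha => ?_, ?_⟩
  · split
    · exact zero_le_one
    · exact le_refl 0
  · rw [if_neg]; rintro rfl; exact ha (hg s)
  · rw [Finset.sum_ite_eq' (avail s) (g s) (fun _ => (1:ℝ)), if_pos (hg s)]

lemma isPolicy_gpol : ∀ t, IsPolicy avail (gpol P avail havail B t) := by
  intro t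
  induction t with
  | zero =>
    intro k s
    exact isPolicy_ind avail _ (gact_mem P avail havail B 0) s
  | succ t ih =>
    intro k s
    cases k with
    | zero => exact isPolicy_ind avail _ (gact_mem P avail havail B t) s
    | succ k => exact ih k s

lemma Wit_le_mass (hP0 : ∀ s a s', 0 ≤ P s a s')
    (hP1 : ∀ s, ∀ a ∈ avail s, (∑ s' : S, P s a s') = 1)
    (habsB : ∀ s ∈ B, ∀ a ∈ avail s, P s a s = 1) :
    ∀ t init, Wit P avail havail B t init ≤ mass P avail B init (gpol P avail havail B t) t := by
  intro t
  induction t with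
  | zero =>
    intro init
    rw [mass_zero P avail (isPolicy_gpol P avail havail B 0) B init]
    simp only [Wit]
    exact le_refl _
  | succ t ih =>
    intro init
    by_cases hB : init ∈ B
    · have h0 : mass P avail B init (gpol P avail havail B (t+1)) 0 = 1 := by
        rw [mass_zero P avail (isPolicy_gpol P avail havail B (t+1)) B init, if_pos hB]
      calc Wit P avail havail B (t+1) init = 1 := by simp [Wit, hB]
        _ = mass P avail B init (gpol P avail havail B (t+1)) 0 := h0.symm
        _ ≤ mass P avail B init (gpol P avail havail B (t+1)) (t+1) :=
          mass_mono P avail hP0 (isPolicy_gpol P avail havail B (t+1)) B habsB init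
            (Nat.zero_le (t+1))
    · rw [mass_rec P avail B init t, gpol_shift]
      have hgp : ∀ a1, gpol P avail havail B (t+1) 0 init a1
          = if a1 = gact P avail havail B t init then 1 else 0 := fun a1 => rfl
      rw [Finset.sum_congr rfl fun a1 (_ : a1 ∈ avail init) => by rw [hgp a1, ite_mul, one_mul,
        zero_mul]]
      rw [Finset.sum_ite_eq' (avail init) (gact P avail havail B t init)
        (fun a1 => ∑ s1 : S, P init a1 s1 * mass P avail B s1 (gpol P avail havail B t) t),
        if_pos (gact_mem P avail havail B t init)]
      have h1 : Wit P avail havail B (t+1) init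
          = ∑ s' : S, P init (gact P avail havail B t init) s' * Wit P avail havail B t s' := by
        simp only [Wit, if_neg hB]
        exact gact_spec P avail havail B t init
      rw [h1]
      exact Finset.sum_le_sum fun s1 _ =>
        mul_le_mul_of_nonneg_left (ih s1) (hP0 _ _ _)

end VI

/-! ### ENNReal conversions -/

section Conv

variable (P : S → A → S → ℝ) (avail : S → Finset A)

lemma ofReal_mass (hP0 : ∀ s a s', 0 ≤ P s a s') {π} (hπ : IsPolicy avail π)
    (C : Finset S) (init : S) (t : ℕ) :
    (∑ s ∈ C, ∑ a ∈ avail s, ENNReal.ofReal (occ P avail init π t s a))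
      = ENNReal.ofReal (mass P avail C init π t) := by
  unfold mass
  rw [ENNReal.ofReal_sum_of_nonneg fun s _ => Finset.sum_nonneg fun a _ =>
    occ_nonneg P avail hP0 hπ init t s a]
  exact Finset.sum_congr rfl fun s _ =>
    (ENNReal.ofReal_sum_of_nonneg fun a _ => occ_nonneg P avail hP0 hπ init t s a).symm

lemma ofReal_iSup_mono (f : ℕ → ℝ) (hmono : Monotone f) (hb : ∀ n, f n ≤ 1) :
    (⨆ n, ENNReal.ofReal (f n)) = ENNReal.ofReal (⨆ n, f n) := by
  have hbdd : BddAbove (Set.range f) := ⟨1, by rintro x ⟨n, rfl⟩; exact hb n⟩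
  refine le_antisymm (iSup_le fun n => ENNReal.ofReal_le_ofReal (le_ciSup hbdd n)) ?_
  have htend : Filter.Tendsto (fun n => ENNReal.ofReal (f n)) Filter.atTop
      (nhds (ENNReal.ofReal (⨆ n, f n))) :=
    (ENNReal.continuous_ofReal.tendsto _).comp (tendsto_atTop_ciSup hmono hbdd)
  exact le_of_tendsto htend (Filter.Eventually.of_forall fun n =>
    le_iSup (fun n => ENNReal.ofReal (f n)) n)

lemma reachProb_eq_mass (hP0 : ∀ s a s', 0 ≤ P s a s') (B : Finset S) {π}
    (hπ : IsPolicy avail π) (init : S) :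
    reachProb P avail B init π = ⨆ t, ENNReal.ofReal (mass P avail B init π t) := by
  unfold reachProb
  exact iSup_congr fun t => ofReal_mass P avail hP0 hπ B init t

lemma xstar_eq_wlim (havail : ∀ s : S, (avail s).Nonempty) (B : Finset S)
    (hP0 : ∀ s a s', 0 ≤ P s a s')
    (hP1 : ∀ s, ∀ a ∈ avail s, (∑ s' : S, P s a s') = 1)
    (habsB : ∀ s ∈ B, ∀ a ∈ avail s, P s a s = 1) (s : S) :
    xstar P avail B s = ENNReal.ofReal (wlim P avail havail B s) := by
  refine le_antisymm ?_ ?_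
  · refine iSup_le fun π' => ?_
    rw [reachProb_eq_mass P avail hP0 B π'.2 s]
    refine iSup_le fun t => ENNReal.ofReal_le_ofReal ?_
    exact le_trans (mass_le_Wit P avail havail B hP0 hP1 t π'.1 π'.2 s)
      (Wit_le_wlim P avail havail B hP0 hP1 t s)
  · have : ENNReal.ofReal (wlim P avail havail B s)
        = ⨆ n, ENNReal.ofReal (Wit P avail havail B n s) :=
      (ofReal_iSup_mono _ (monotone_nat_of_le_succ fun n => Wit_mono P avail havail B hP0 n s)
        (fun n => Wit_le_one P avail havail B hP0 hP1 n s)).symm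
    rw [this]
    refine iSup_le fun t => ?_
    have h1 : ENNReal.ofReal (Wit P avail havail B t s)
        ≤ reachProb P avail B s (gpol P avail havail B t) := by
      rw [reachProb_eq_mass P avail hP0 B (isPolicy_gpol P avail havail B t) s]
      refine le_trans (ENNReal.ofReal_le_ofReal
        (Wit_le_mass P avail havail B hP0 hP1 habsB t s))
        (le_iSup (fun t' => ENNReal.ofReal (mass P avail B s (gpol P avail havail B t) t')) t)
    exact le_trans h1 (le_iSup (fun π' : {π : ℕ → S → A → ℝ // IsPolicy avail π} =>
      reachProb P avail B s π'.1) ⟨gpol P avail havail B t, isPolicy_gpol P avail havail B t⟩)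

end Conv

/-- Any stationary policy that maximizes the probability of reaching `B` reaches the absorbing
set `B ∪ S_0` with probability 1:
`sup_{t≥1} Σ_{s∈B∪S_0} Σ_{a∈A(s)} μ^π_t(s,a) = 1`. -/
theorem stationary_optimal_policy_reaches_absorbing_set
    (P : S → A → S → ℝ) (avail : S → Finset A) (s0 : S) (B : Finset S)
    (havail : ∀ s, (avail s).Nonempty)
    (hP0 : ∀ s a s', 0 ≤ P s a s')
    (hP1 : ∀ s, ∀ a ∈ avail s, (∑ s' : S, P s a s') = 1)
    (habs : ∀ s : S, (s ∈ B ∨ xstar P avail B s = 0) → Absorbing P avail s)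
    (hs0B : s0 ∉ B) (hs0r : xstar P avail B s0 ≠ 0)
    (π : ℕ → S → A → ℝ) (hπ : IsPolicy avail π) (hstat : IsStationaryPolicy π)
    (hopt : reachProb P avail B s0 π = xstar P avail B s0) :
    (⨆ t : ℕ, ∑ s ∈ B ∪ Finset.univ.filter (fun s => xstar P avail B s = 0),
      ∑ a ∈ avail s, ENNReal.ofReal (occ P avail s0 π t s a)) = 1 := by
  set T : Finset S := B ∪ Finset.univ.filter (fun s => xstar P avail B s = 0) with hT
  have habsB : ∀ s ∈ B, ∀ a ∈ avail s, P s a s = 1 := fun s hs => habs s (Or.inl hs)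
  have habsT : ∀ s ∈ T, ∀ a ∈ avail s, P s a s = 1 := by
    intro s hs
    rcases Finset.mem_union.mp hs with h | h
    · exact habs s (Or.inl h)
    · exact habs s (Or.inr ((Finset.mem_filter.mp h).2))
  set w : S → ℝ := wlim P avail havail B with hwdef
  have hxw : ∀ s, xstar P avail B s = ENNReal.ofReal (w s) :=
    fun s => xstar_eq_wlim P avail havail B hP0 hP1 habsB s
  have hw0 : ∀ s, 0 ≤ w s := fun s => wlim_nonneg P avail havail B hP0 hP1 s
  have hw1 : ∀ s, w s ≤ 1 := fun s => wlim_le_one P avail havail B hP0 hP1 s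
  have hwB : ∀ s ∈ B, w s = 1 := fun s hs => wlim_of_mem P avail havail B hP0 hP1 hs
  have hsuper : ∀ s, ∀ a ∈ avail s, ∑ s' : S, P s a s' * w s' ≤ w s :=
    fun s a ha => wlim_superharmonic P avail havail B hP0 hP1 s a ha
  -- the value of the policy π from each state
  have hmassmono : ∀ init, Monotone (mass P avail B init π) :=
    fun init => mass_mono P avail hP0 hπ B habsB init
  set y : S → ℝ := fun s => ⨆ t, mass P avail B s π t with hydef
  have hybdd : ∀ s, BddAbove (Set.range fun t => mass P avail B s π t) := by
    intro s
    exact ⟨1, by rintro x ⟨t, rfl⟩; exact mass_le_one P avail hP0 hP1 hπ B s t⟩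
  have hmy : ∀ s t, mass P avail B s π t ≤ y s := fun s t => le_ciSup (hybdd s) t
  have hy1 : ∀ s, y s ≤ 1 := fun s => ciSup_le fun t => mass_le_one P avail hP0 hP1 hπ B s t
  have hy0 : ∀ s, 0 ≤ y s :=
    fun s => le_trans (mass_nonneg P avail hP0 hπ B s 0) (hmy s 0)
  have hytend : ∀ s, Filter.Tendsto (fun t => mass P avail B s π t) Filter.atTop (nhds (y s)) :=
    fun s => tendsto_atTop_ciSup (hmassmono s) (hybdd s)
  have hyw : ∀ s, y s ≤ w s := fun s => ciSup_le fun t =>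
    le_trans (mass_le_Wit P avail havail B hP0 hP1 t π hπ s)
      (Wit_le_wlim P avail havail B hP0 hP1 t s)
  have hshift : shiftPol π = π := funext fun n => (hstat (n+1)).trans (hstat n).symm
  have hyB : ∀ s ∈ B, y s = 1 := by
    intro s hs
    refine le_antisymm (hy1 s) ?_
    have h0 : mass P avail B s π 0 = 1 := by
      rw [mass_zero P avail hπ B s, if_pos hs]
    rw [← h0]; exact hmy s 0
  have hyF : ∀ s, xstar P avail B s = 0 → y s = 0 := by
    intro s hxs
    have hws : w s ≤ 0 := ENNReal.ofReal_eq_zero.mp (by rw [← hxw s]; exact hxs)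
    exact le_antisymm (le_trans (hyw s) hws) (hy0 s)
  -- harmonicity of y
  have hharm : ∀ init, y init
      = ∑ a ∈ avail init, π 0 init a * ∑ s1 : S, P init a s1 * y s1 := by
    intro init
    have h1 : Filter.Tendsto (fun t => mass P avail B init π (t+1)) Filter.atTop
        (nhds (y init)) := (hytend init).comp (Filter.tendsto_add_atTop_nat 1)
    have h2 : ∀ t, mass P avail B init π (t+1)
        = ∑ a ∈ avail init, π 0 init a * ∑ s1 : S, P init a s1 * mass P avail B s1 π t := by
      intro t; rw [mass_rec P avail B init t, hshift]
    have h3 : Filter.Tendsto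
        (fun t => ∑ a ∈ avail init, π 0 init a * ∑ s1 : S, P init a s1 * mass P avail B s1 π t)
        Filter.atTop
        (nhds (∑ a ∈ avail init, π 0 init a * ∑ s1 : S, P init a s1 * y s1)) :=
      tendsto_finset_sum _ fun a _ =>
        (tendsto_finset_sum _ fun s1 _ => (hytend s1).const_mul _).const_mul _
    exact tendsto_nhds_unique (h1.congr h2) h3
  -- optimality: y s0 = w s0
  have hyws0 : y s0 = w s0 := by
    have h1 : reachProb P avail B s0 π = ENNReal.ofReal (y s0) := by
      rw [reachProb_eq_mass P avail hP0 B hπ s0]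
      exact ofReal_iSup_mono _ (hmassmono s0)
        (fun t => mass_le_one P avail hP0 hP1 hπ B s0 t)
    have h2 : ENNReal.ofReal (y s0) = ENNReal.ofReal (w s0) := by
      rw [← h1, hopt, hxw]
    exact (ENNReal.ofReal_eq_ofReal_iff (hy0 s0) (hw0 s0)).mp h2
  -- occupation-measure state marginals
  set ν : ℕ → S → ℝ := fun t s => ∑ a ∈ avail s, occ P avail s0 π t s a with hνdef
  have hν0 : ∀ t s, 0 ≤ ν t s :=
    fun t s => Finset.sum_nonneg fun a _ => occ_nonneg P avail hP0 hπ s0 t s a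
  have hνtot : ∀ t, ∑ s : S, ν t s = 1 := fun t => occ_total P avail hP1 hπ s0 t
  have hνzero : ∀ s, ν 0 s = if s = s0 then 1 else 0 := by
    intro s
    simp only [hνdef, occ]
    by_cases h : s = s0
    · rw [Finset.sum_congr rfl fun a (_ : a ∈ avail s) => if_pos h, if_pos h]
      exact (hπ 0 s).2.2
    · rw [Finset.sum_congr rfl fun a (_ : a ∈ avail s) => if_neg h, if_neg h,
        Finset.sum_const_zero]
  have hstep : ∀ (t : ℕ) (f : S → ℝ), ∑ s' : S, ν (t+1) s' * f s'
      = ∑ s : S, ∑ a ∈ avail s, occ P avail s0 π t s a * (∑ s' : S, P s a s' * f s') := by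
    intro t f
    have h1 : ∀ s', ν (t+1) s'
        = ∑ s : S, ∑ a ∈ avail s, P s a s' * occ P avail s0 π t s a := by
      intro s'
      have hu : ∀ a' ∈ avail s', occ P avail s0 π (t+1) s' a' = π (t+1) s' a' *
          ∑ s : S, ∑ a ∈ avail s, P s a s' * occ P avail s0 π t s a := fun a' _ => rfl
      simp only [hνdef]
      rw [Finset.sum_congr rfl hu, ← Finset.sum_mul, (hπ (t+1) s').2.2, one_mul]
    calc ∑ s' : S, ν (t+1) s' * f s'
        = ∑ s' : S, ∑ s : S, ∑ a ∈ avail s,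
            (P s a s' * occ P avail s0 π t s a) * f s' := by
          refine Finset.sum_congr rfl fun s' _ => ?_
          rw [h1 s', Finset.sum_mul]
          exact Finset.sum_congr rfl fun s _ => by rw [Finset.sum_mul]
      _ = ∑ s : S, ∑ a ∈ avail s, ∑ s' : S,
            (P s a s' * occ P avail s0 π t s a) * f s' := by
          rw [Finset.sum_comm]
          exact Finset.sum_congr rfl fun s _ =>
            Finset.sum_comm (s := Finset.univ) (t := avail s)
              (f := fun s' a => (P s a s' * occ P avail s0 π t s a) * f s')
      _ = ∑ s : S, ∑ a ∈ avail s,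
            occ P avail s0 π t s a * (∑ s' : S, P s a s' * f s') := by
          refine Finset.sum_congr rfl fun s _ => Finset.sum_congr rfl fun a _ => ?_
          rw [Finset.mul_sum]
          exact Finset.sum_congr rfl fun s' _ => by ring
  -- conservation of y along the occupancy flow
  have hcons : ∀ t, ∑ s : S, ν t s * y s = y s0 := by
    intro t
    induction t with
    | zero =>
      rw [Finset.sum_congr rfl fun s (_ : s ∈ Finset.univ) => by
        rw [hνzero s, ite_mul, one_mul, zero_mul]]
      rw [Finset.sum_ite_eq' Finset.univ s0 y, if_pos (Finset.mem_univ s0)]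
    | succ t ih =>
      rw [hstep t y, ← ih]
      refine Finset.sum_congr rfl fun s _ => ?_
      rw [Finset.sum_congr rfl fun a (_ : a ∈ avail s) => by
        rw [occ_prod P avail hπ hstat s0 t s a]]
      have hνs : ∑ a' ∈ avail s, occ P avail s0 π t s a' = ν t s := rfl
      rw [hharm s, Finset.mul_sum]
      exact Finset.sum_congr rfl fun a _ => by rw [hνs]; ring
  -- supermartingale property of w
  have hsupm : ∀ t, ∑ s : S, ν t s * w s ≤ w s0 := by
    intro t
    induction t with
    | zero =>
      rw [Finset.sum_congr rfl fun s (_ : s ∈ Finset.univ) => by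
        rw [hνzero s, ite_mul, one_mul, zero_mul]]
      rw [Finset.sum_ite_eq' Finset.univ s0 w, if_pos (Finset.mem_univ s0)]
    | succ t ih =>
      rw [hstep t w]
      calc ∑ s : S, ∑ a ∈ avail s, occ P avail s0 π t s a * (∑ s' : S, P s a s' * w s')
          ≤ ∑ s : S, ∑ a ∈ avail s, occ P avail s0 π t s a * w s :=
            Finset.sum_le_sum fun s _ => Finset.sum_le_sum fun a ha =>
              mul_le_mul_of_nonneg_left (hsuper s a ha)
                (occ_nonneg P avail hP0 hπ s0 t s a)
        _ = ∑ s : S, ν t s * w s :=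
            Finset.sum_congr rfl fun s _ => by rw [← Finset.sum_mul]
        _ ≤ w s0 := ih
  -- the gap w - y vanishes on all reachable states
  have hgap : ∀ t s, ν t s * (w s - y s) = 0 := by
    intro t
    have hsum : ∑ s : S, ν t s * (w s - y s)
        = (∑ s : S, ν t s * w s) - (∑ s : S, ν t s * y s) := by
      rw [← Finset.sum_sub_distrib]
      exact Finset.sum_congr rfl fun s _ => by ring
    have hle : ∑ s : S, ν t s * (w s - y s) ≤ 0 := by
      rw [hsum, hcons t, hyws0]
      linarith [hsupm t]
    have hge : ∀ s ∈ Finset.univ, (0:ℝ) ≤ ν t s * (w s - y s) :=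
      fun s _ => mul_nonneg (hν0 t s) (sub_nonneg.mpr (hyw s))
    have hz := (Finset.sum_eq_zero_iff_of_nonneg hge).mp
      (le_antisymm hle (Finset.sum_nonneg hge))
    exact fun s => hz s (Finset.mem_univ s)
  -- the positive lower bound on w over the non-target states
  set R : Finset S := Finset.univ \ T with hRdef
  have hs0R : s0 ∈ R := by
    rw [hRdef, Finset.mem_sdiff]
    refine ⟨Finset.mem_univ s0, ?_⟩
    rw [hT, Finset.mem_union]
    rintro (h | h)
    · exact hs0B h
    · exact hs0r (Finset.mem_filter.mp h).2
  have hRne : R.Nonempty := ⟨s0, hs0R⟩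
  set c : ℝ := R.inf' hRne w with hcdef
  have hcle : ∀ s ∈ R, c ≤ w s := fun s hs => Finset.inf'_le w hs
  have hcpos : 0 < c := by
    obtain ⟨s, hsR, hseq⟩ := Finset.exists_mem_eq_inf' hRne w
    rw [hcdef, hseq]
    have hsnT : s ∉ T := (Finset.mem_sdiff.mp hsR).2
    have hxs : xstar P avail B s ≠ 0 := by
      intro hc
      apply hsnT
      rw [hT]
      apply Finset.mem_union_right
      exact Finset.mem_filter.mpr ⟨Finset.mem_univ s, hc⟩
    have hne : ENNReal.ofReal (w s) ≠ 0 := by rw [← hxw s]; exact hxs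
    by_contra hle
    exact hne (ENNReal.ofReal_eq_zero.mpr (le_of_not_gt hle))
  -- termwise: on R, c·ν ≤ ν·y
  have hterm : ∀ t s, s ∈ R → c * ν t s ≤ ν t s * y s := by
    intro t s hs
    rcases eq_or_lt_of_le (hν0 t s) with h | h
    · rw [← h, mul_zero, zero_mul]
    · have hws : w s = y s := by
        rcases mul_eq_zero.mp (hgap t s) with h1 | h1
        · exact absurd h1.symm (ne_of_lt h)
        · linarith
      calc c * ν t s ≤ y s * ν t s :=
            mul_le_mul_of_nonneg_right (by rw [← hws]; exact hcle s hs) (hν0 t s)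
        _ = ν t s * y s := mul_comm _ _
  have hTmass : ∀ t, mass P avail T s0 π t = ∑ s ∈ T, ν t s := fun t => rfl
  have hBmass : ∀ t, mass P avail B s0 π t = ∑ s ∈ B, ν t s := fun t => rfl
  -- bound on the mass outside T
  have hRsum : ∀ t, c * (∑ s ∈ R, ν t s) ≤ y s0 - mass P avail B s0 π t := by
    intro t
    have h1 : c * (∑ s ∈ R, ν t s) ≤ ∑ s ∈ R, ν t s * y s := by
      rw [Finset.mul_sum]
      exact Finset.sum_le_sum fun s hs => hterm t s hs
    have hsplit : (∑ s ∈ R, ν t s * y s) + (∑ s ∈ T, ν t s * y s)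
        = ∑ s : S, ν t s * y s := by
      rw [hRdef]
      exact Finset.sum_sdiff (Finset.subset_univ T)
    have h3 : ∑ s ∈ T, ν t s * y s = mass P avail B s0 π t := by
      have hcongr : ∀ s ∈ T, ν t s * y s = if s ∈ B then ν t s else 0 := by
        intro s hs
        by_cases hB : s ∈ B
        · rw [if_pos hB, hyB s hB, mul_one]
        · have hsF : xstar P avail B s = 0 := by
            rcases Finset.mem_union.mp (hT ▸ hs) with h | h
            · exact absurd h hB
            · exact (Finset.mem_filter.mp h).2
          rw [if_neg hB, hyF s hsF, mul_zero]
      rw [Finset.sum_congr rfl hcongr, Finset.sum_ite_mem T B (fun s => ν t s),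
        Finset.inter_eq_right.mpr (hT ▸ Finset.subset_union_left), hBmass t]
    have h4 := hcons t
    rw [← hsplit, h3] at h4
    linarith
  -- mass in T tends to 1
  have hmassT : ∀ t, 1 - (y s0 - mass P avail B s0 π t)/c ≤ mass P avail T s0 π t := by
    intro t
    have hsplit : (∑ s ∈ R, ν t s) + (∑ s ∈ T, ν t s) = 1 := by
      rw [hRdef, Finset.sum_sdiff (Finset.subset_univ T)]
      exact hνtot t
    have h1 : ∑ s ∈ R, ν t s ≤ (y s0 - mass P avail B s0 π t)/c :=
      (le_div_iff₀' hcpos).mpr (hRsum t)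
    rw [hTmass t]
    linarith
  have hTbdd : BddAbove (Set.range fun t => mass P avail T s0 π t) :=
    ⟨1, by rintro x ⟨t, rfl⟩; exact mass_le_one P avail hP0 hP1 hπ T s0 t⟩
  have hTm1 : (⨆ t, mass P avail T s0 π t) = 1 := by
    refine le_antisymm (ciSup_le fun t => mass_le_one P avail hP0 hP1 hπ T s0 t) ?_
    have htendT : Filter.Tendsto (fun t => 1 - (y s0 - mass P avail B s0 π t)/c)
        Filter.atTop (nhds (1 - (y s0 - y s0)/c)) :=
      tendsto_const_nhds.sub ((tendsto_const_nhds.sub (hytend s0)).div_const c)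
    have heq1 : (1:ℝ) - (y s0 - y s0)/c = 1 := by rw [sub_self, zero_div, sub_zero]
    rw [← heq1]
    exact le_of_tendsto htendT (Filter.Eventually.of_forall fun t =>
      le_trans (hmassT t) (le_ciSup hTbdd t))
  calc (⨆ t : ℕ, ∑ s ∈ T, ∑ a ∈ avail s, ENNReal.ofReal (occ P avail s0 π t s a))
      = ⨆ t, ENNReal.ofReal (mass P avail T s0 π t) :=
        iSup_congr fun t => ofReal_mass P avail hP0 hπ T s0 t
    _ = ENNReal.ofReal (⨆ t, mass P avail T s0 π t) :=
        ofReal_iSup_mono _ (mass_mono P avail hP0 hπ T habsT s0)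
          (fun t => mass_le_one P avail hP0 hP1 hπ T s0 t)
    _ = 1 := by rw [hTm1, ENNReal.ofReal_one]

end
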